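/- Let K ⊂ ℂ be compact, non-polar and polynomially convex, and let Ω = ℂ \ K with Green's function g_Ω with pole at infinity. If a sequence of polynomials (q_k) of degrees n_k → ∞ is K-regular, then the sequence of derivatives (q_k') is also K-regular. -/

import Mathlib

open MeasureTheory Metric Filter Polynomial Topology Asymptotics
open scoped Classical ENNReal

/-- Logarithmic potential of a measure, `p_μ(z) = ∫ log|z-w| dμ(w)`. -/
noncomputable def logPotential (μ : Measure ℂ) (z : ℂ) : ℝ :=
  ∫ w, Real.log ‖z - w‖ ∂μ

/-- Logarithmic energy `I(μ) = ∫ p_μ dμ`. -/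
noncomputable def logEnergy (μ : Measure ℂ) : ℝ :=
  ∫ z, logPotential μ z ∂μ

/-- A compact set is non-polar if it carries a probability measure of finite logarithmic
energy (equivalently, positive logarithmic capacity). -/
def NonPolar (K : Set ℂ) : Prop :=
  ∃ μ : Measure ℂ, IsProbabilityMeasure μ ∧ μ Kᶜ = 0 ∧
    Integrable (fun p : ℂ × ℂ => Real.log ‖p.1 - p.2‖) (μ.prod μ)

/-- `ω` is the equilibrium measure of `K`: a probability measure supported on `K`,
of finite energy, maximizing the logarithmic energy (Ransford's sign convention). -/
structure IsEquilibriumMeasure (K : Set ℂ) (ω : Measure ℂ) : Prop where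
  prob : IsProbabilityMeasure ω
  supp : ω Kᶜ = 0
  finite_energy :
    Integrable (fun p : ℂ × ℂ => Real.log ‖p.1 - p.2‖) (ω.prod ω)
  maximal : ∀ ν : Measure ℂ, IsProbabilityMeasure ν → ν Kᶜ = 0 →
    Integrable (fun p : ℂ × ℂ => Real.log ‖p.1 - p.2‖) (ν.prod ν) →
    logEnergy ν ≤ logEnergy ω

/-- Green's function of `Ω = ℂ \ K` with pole at infinity, `g_Ω = p_ω − I(ω)`,
where `ω` is the equilibrium measure of `K`. -/
noncomputable def greenFn (ω : Measure ℂ) (z : ℂ) : ℝ :=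
  logPotential ω z - logEnergy ω

/-- Root distribution of a polynomial: average of Dirac masses at its roots
with multiplicity. -/
noncomputable def rootDist (q : Polynomial ℂ) : Measure ℂ :=
  ((q.natDegree : ℝ≥0∞))⁻¹ • (q.roots.map Measure.dirac).sum

/-- `K`-regularity of a sequence of polynomials: `(1/n_k) log|q_k| → g`
uniformly outside some disk. -/
def KRegular (q : ℕ → Polynomial ℂ) (g : ℂ → ℝ) : Prop :=
  ∃ R > (0:ℝ), TendstoUniformlyOn
    (fun k z => ((q k).natDegree : ℝ)⁻¹ * Real.log ‖(q k).eval z‖)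
    g atTop (closedBall (0:ℂ) R)ᶜ

/-- The sequence `(q_k)` centers on the compact set `C`. -/
def Centers (q : ℕ → Polynomial ℂ) (C : Set ℂ) : Prop :=
  ∃ N : ℕ,
    (∃ R > (0:ℝ), ∀ k ≥ N, ∀ z : ℂ, (q k).IsRoot z → z ∈ ball (0:ℂ) R) ∧
    (∀ L : Set ℂ, IsClosed L → Disjoint L C →
      ∃ M : ℕ, 0 < M ∧ ∀ k ≥ N, (((q k).roots).filter (· ∈ L)).card ≤ M)

/-- The sequence `(q_k)` weakly centers on the compact set `C`. -/
def WeaklyCenters (q : ℕ → Polynomial ℂ) (C : Set ℂ) : Prop :=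
  (∃ N : ℕ, ∃ R > (0:ℝ), ∀ k ≥ N, ∀ z : ℂ, (q k).IsRoot z → z ∈ ball (0:ℂ) R) ∧
  (∀ L : Set ℂ, IsClosed L → Disjoint L C →
    Tendsto (fun k => rootDist (q k) L) atTop (nhds 0))

/-- Weak-star convergence of measures, tested against bounded continuous functions. -/
def WeakStarTendsto (μ : ℕ → Measure ℂ) (ν : Measure ℂ) : Prop :=
  ∀ f : BoundedContinuousFunction ℂ ℝ,
    Tendsto (fun k => ∫ z, f z ∂(μ k)) atTop (nhds (∫ z, f z ∂ν))

section Aux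

lemma aux_deriv_prod (s : Multiset ℂ) (z : ℂ) (hz : ∀ r ∈ s, z - r ≠ 0) :
    Polynomial.eval z (Polynomial.derivative ((s.map (fun r => X - C r)).prod))
      = Polynomial.eval z ((s.map (fun r => X - C r)).prod)
        * (s.map (fun r => (z - r)⁻¹)).sum := by
  induction s using Multiset.induction with
  | empty => simp
  | cons a t ih =>
    have ha : z - a ≠ 0 := hz a (Multiset.mem_cons_self a t)
    have ih' := ih (fun r hr => hz r (Multiset.mem_cons_of_mem hr))
    simp only [Multiset.map_cons, Multiset.prod_cons, Multiset.sum_cons, derivative_mul,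
      eval_add, eval_mul, eval_sub, eval_X, eval_C, ih', derivative_sub, derivative_X,
      derivative_C, sub_zero, eval_one]
    field_simp

lemma aux_deriv_eval (p : Polynomial ℂ) (z : ℂ)
    (hroots : Multiset.card p.roots = p.natDegree)
    (hz : ∀ r ∈ p.roots, z - r ≠ 0) :
    Polynomial.eval z (Polynomial.derivative p)
      = Polynomial.eval z p * (p.roots.map (fun r => (z - r)⁻¹)).sum := by
  have hp := Polynomial.C_leadingCoeff_mul_prod_multiset_X_sub_C hroots
  have h1 : eval z (derivative p)
      = p.leadingCoeff * eval z (derivative ((p.roots.map fun r => X - C r).prod)) := by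
    conv_lhs => rw [← hp]
    rw [derivative_C_mul, eval_mul, eval_C]
  have h2 : eval z p
      = p.leadingCoeff * eval z ((p.roots.map fun r => X - C r).prod) := by
    conv_lhs => rw [← hp]
    rw [eval_mul, eval_C]
  rw [h1, h2, aux_deriv_prod _ _ hz]
  ring

lemma aux_sum_bound (s : Multiset ℂ) (R : ℝ) (z : ℂ) (hR : 0 < R)
    (hs : ∀ r ∈ s, ‖r‖ ≤ R) (hz : 3 * R ≤ ‖z‖) :
    (Multiset.card s : ℝ) / (2 * ‖z‖)
      ≤ ‖(s.map fun r => (z - r)⁻¹).sum‖ ∧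
    ‖(s.map fun r => (z - r)⁻¹).sum‖
      ≤ 3 * (Multiset.card s : ℝ) / (2 * ‖z‖) := by
  have hz0 : (0:ℝ) < ‖z‖ := lt_of_lt_of_le (by linarith) hz
  have hzne : z ≠ 0 := by
    intro hzz; rw [hzz] at hz0; simp at hz0
  have habs : ∀ r ∈ s, (2/3) * ‖z‖ ≤ ‖z - r‖ := by
    intro r hr
    have h1 : ‖z‖ - ‖r‖ ≤ ‖z - r‖ := by
      simpa using norm_sub_norm_le z r
    have := hs r hr
    linarith
  have hzrne : ∀ r ∈ s, z - r ≠ 0 := by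
    intro r hr hc
    have := habs r hr
    rw [hc] at this; simp at this
    linarith
  have key : ∀ r ∈ s, ‖(z - r)⁻¹ - z⁻¹‖ ≤ 1 / (2 * ‖z‖) := by
    intro r hr
    have hne1 := hzrne r hr
    have h1 : (z - r)⁻¹ - z⁻¹ = r / ((z - r) * z) := by
      field_simp
      ring
    rw [h1, norm_div, norm_mul]
    have h2 := habs r hr
    have h3 := hs r hr
    have hp1 : 0 < ‖z - r‖ := lt_of_lt_of_le (by positivity) h2
    rw [div_le_div_iff₀ (mul_pos hp1 hz0) (by positivity)]
    nlinarith
  set S := (s.map fun r => (z - r)⁻¹).sum with hS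
  set n : ℕ := Multiset.card s with hn
  have hconst : (s.map fun _ => z⁻¹).sum = (n : ℂ) * z⁻¹ := by
    rw [Multiset.map_const', Multiset.sum_replicate, nsmul_eq_mul]
  have hdiffeq : S - (n : ℂ) * z⁻¹ = (s.map fun r => (z - r)⁻¹ - z⁻¹).sum := by
    rw [Multiset.sum_map_sub, hconst]
  have hdiff : ‖S - (n : ℂ) * z⁻¹‖ ≤ (n : ℝ) / (2 * ‖z‖) := by
    rw [hdiffeq]
    calc ‖(s.map fun r => (z - r)⁻¹ - z⁻¹).sum‖
        ≤ ((s.map fun r => (z - r)⁻¹ - z⁻¹).map (fun x : ℂ => ‖x‖)).sum := by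
          simpa using
            norm_multiset_sum_le (s.map fun r => (z - r)⁻¹ - z⁻¹)
      _ ≤ (Multiset.card s) • (1 / (2 * ‖z‖)) := by
          rw [Multiset.map_map]
          have hb := Multiset.sum_le_card_nsmul
            (s.map ((fun x : ℂ => ‖x‖) ∘ fun r => (z - r)⁻¹ - z⁻¹)) (1 / (2 * ‖z‖))
            (by
              intro x hx
              obtain ⟨r, hr, rfl⟩ := Multiset.mem_map.mp hx
              exact key r hr)
          simpa [Multiset.card_map] using hb
      _ = (n : ℝ) / (2 * ‖z‖) := by
          rw [nsmul_eq_mul]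
          field_simp
          rfl
  have hT : ‖(n : ℂ) * z⁻¹‖ = (n : ℝ) / ‖z‖ := by
    rw [norm_mul, norm_inv, Complex.norm_natCast]
    field_simp
  have htri1 : ‖(n:ℂ) * z⁻¹‖ - ‖S‖ ≤ ‖S - (n:ℂ) * z⁻¹‖ := by
    simpa [norm_sub_rev] using norm_sub_norm_le ((n:ℂ) * z⁻¹) S
  have htri2 : ‖S‖ - ‖(n:ℂ) * z⁻¹‖ ≤ ‖S - (n:ℂ) * z⁻¹‖ := by
    simpa using norm_sub_norm_le S ((n:ℂ) * z⁻¹)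
  rw [hT] at htri1 htri2
  constructor
  · have : (n : ℝ) / ‖z‖ - (n : ℝ) / (2 * ‖z‖)
        = (n : ℝ) / (2 * ‖z‖) := by field_simp; ring
    linarith
  · have : (n : ℝ) / ‖z‖ + (n : ℝ) / (2 * ‖z‖)
        = 3 * (n : ℝ) / (2 * ‖z‖) := by field_simp; ring
    linarith

lemma aux_tendsto (Cc : ℝ) :
    Tendsto (fun n : ℕ => (Real.log n + Cc) / ((n : ℝ) - 1)) atTop (nhds 0) := by
  have h1 : (fun x : ℝ => Real.log x + Cc) =o[atTop] (fun x : ℝ => x - 1) := by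
    have hlog : (fun x : ℝ => Real.log x) =o[atTop] (id : ℝ → ℝ) :=
      Real.isLittleO_log_id_atTop
    have hc : (fun _ : ℝ => Cc) =o[atTop] (id : ℝ → ℝ) := isLittleO_const_id_atTop Cc
    have hid : (id : ℝ → ℝ) =O[atTop] (fun x : ℝ => x - 1) := by
      rw [isBigO_iff]
      refine ⟨2, ?_⟩
      filter_upwards [eventually_ge_atTop (2:ℝ)] with x hx
      simp only [id_eq, Real.norm_eq_abs]
      rw [abs_of_nonneg (by linarith : (0:ℝ) ≤ x), abs_of_nonneg (by linarith : (0:ℝ) ≤ x - 1)]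
      linarith
    exact (hlog.add hc).trans_isBigO hid
  exact h1.tendsto_div_nhds_zero.comp tendsto_natCast_atTop_atTop

lemma aux_potential (ω : Measure ℂ) [IsProbabilityMeasure ω] (K : Set ℂ) (hsupp : ω Kᶜ = 0)
    (R₀ : ℝ) (hR₀ : 1 ≤ R₀) (hKsub : K ⊆ closedBall 0 R₀) (z : ℂ)
    (hz : 2 * R₀ ≤ ‖z‖) :
    Real.log (‖z‖ / 2) ≤ logPotential ω z ∧
      logPotential ω z ≤ Real.log (2 * ‖z‖) := by
  have hz0 : (0:ℝ) < ‖z‖ := by linarith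
  have hae : ∀ᵐ w ∂ω, w ∈ K := by
    rw [MeasureTheory.ae_iff]
    simpa [Set.compl_def] using hsupp
  have hmeas : Measurable (fun w => Real.log (‖z - w‖)) :=
    Real.measurable_log.comp
      ((continuous_norm.comp (continuous_const.sub continuous_id)).measurable)
  have hlow : ∀ᵐ w ∂ω, Real.log (‖z‖ / 2) ≤ Real.log (‖z - w‖) := by
    filter_upwards [hae] with w hw
    apply Real.log_le_log (by positivity)
    have h1 : ‖w‖ ≤ R₀ := by
      simpa using mem_closedBall_zero_iff.mp (hKsub hw)
    have h2 : ‖z‖ - ‖w‖ ≤ ‖z - w‖ := by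
      simpa using norm_sub_norm_le z w
    linarith
  have hhigh : ∀ᵐ w ∂ω, Real.log (‖z - w‖) ≤ Real.log (2 * ‖z‖) := by
    filter_upwards [hae] with w hw
    have h1 : ‖w‖ ≤ R₀ := by
      simpa using mem_closedBall_zero_iff.mp (hKsub hw)
    have h2 : ‖z - w‖ ≤ ‖z‖ + ‖w‖ := by
      simpa using norm_sub_le z w
    rcases eq_or_ne (‖z - w‖) 0 with h0 | h0
    · rw [h0, Real.log_zero]
      apply Real.log_nonneg; nlinarith
    · apply Real.log_le_log (lt_of_le_of_ne (norm_nonneg _) (Ne.symm h0))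
      linarith
  have hbound : ∀ᵐ w ∂ω, ‖Real.log (‖z - w‖)‖ ≤ Real.log (2 * ‖z‖) := by
    filter_upwards [hlow, hhigh] with w h1 h2
    rw [Real.norm_eq_abs, abs_le]
    constructor
    · have : (0:ℝ) ≤ Real.log (‖z‖ / 2) := Real.log_nonneg (by linarith)
      have h3 : (0:ℝ) ≤ Real.log (2 * ‖z‖) := Real.log_nonneg (by nlinarith)
      linarith
    · exact h2
  have hint : Integrable (fun w => Real.log (‖z - w‖)) ω :=
    Integrable.mono' (integrable_const _) hmeas.aestronglyMeasurable hbound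
  have hconst : ∀ c : ℝ, ∫ _, c ∂ω = c := by
    intro c; simp [integral_const]
  constructor
  · calc Real.log (‖z‖ / 2) = ∫ _, Real.log (‖z‖ / 2) ∂ω :=
          (hconst _).symm
      _ ≤ logPotential ω z := integral_mono_ae (integrable_const _) hint hlow
  · calc logPotential ω z ≤ ∫ _, Real.log (2 * ‖z‖) ∂ω :=
          integral_mono_ae hint (integrable_const _) hhigh
      _ = Real.log (2 * ‖z‖) := hconst _

lemma aux_abs3 (x y w : ℝ) : |x - y - w| ≤ |x| + |y| + |w| := by
  have h1 : |x - y - w| ≤ |x - y| + |w| := by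
    calc |x - y - w| = |(x - y) + (-w)| := by ring_nf
      _ ≤ |x - y| + |(-w)| := abs_add_le _ _
      _ = |x - y| + |w| := by rw [abs_neg]
  have h2 : |x - y| ≤ |x| + |y| := abs_sub x y
  linarith

end Aux

set_option maxHeartbeats 1000000 in
theorem stmt_3' (K : Set ℂ) (hK : IsCompact K)
    (ω : Measure ℂ) (hprob : IsProbabilityMeasure ω) (hsupp : ω Kᶜ = 0)
    (q : ℕ → Polynomial ℂ)
    (hdeg : Tendsto (fun k => (q k).natDegree) atTop atTop)
    (R₁ : ℝ) (hR₁ : 0 < R₁)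
    (hu : TendstoUniformlyOn
      (fun k z => ((q k).natDegree : ℝ)⁻¹ * Real.log (‖(q k).eval z‖))
      (greenFn ω) atTop (closedBall (0:ℂ) R₁)ᶜ) :
    ∃ R > (0:ℝ), TendstoUniformlyOn
      (fun k z => ((Polynomial.derivative (q k)).natDegree : ℝ)⁻¹
        * Real.log (‖(Polynomial.derivative (q k)).eval z‖))
      (greenFn ω) atTop (closedBall (0:ℂ) R)ᶜ := by
  haveI := hprob
  obtain ⟨r0, hr0⟩ := hK.isBounded.subset_closedBall 0
  set R₀ : ℝ := max r0 1 with hR₀def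
  have hR₀1 : 1 ≤ R₀ := le_max_right _ _
  have hKsub : K ⊆ closedBall 0 R₀ :=
    hr0.trans (closedBall_subset_closedBall (le_max_left _ _))
  set Iω := logEnergy ω with hIωdef
  set R₂ : ℝ := max (max R₁ (2 * R₀)) (2 * Real.exp (1 + |Iω|)) with hR₂def
  have hR₂R₁ : R₁ ≤ R₂ := le_trans (le_max_left _ _) (le_max_left _ _)
  have hR₂R₀ : 2 * R₀ ≤ R₂ := le_trans (le_max_right _ _) (le_max_left _ _)
  have hR₂e : 2 * Real.exp (1 + |Iω|) ≤ R₂ := le_max_right _ _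
  have hR₂pos : 0 < R₂ := by linarith
  have hR₂2 : 2 ≤ R₂ := by linarith
  -- Green's function is ≥ 1 far away
  have hg1 : ∀ z : ℂ, R₂ ≤ ‖z‖ → 1 ≤ greenFn ω z := by
    intro z hz
    have h2R₀ : 2 * R₀ ≤ ‖z‖ := le_trans hR₂R₀ hz
    have hp := (aux_potential ω K hsupp R₀ hR₀1 hKsub z h2R₀).1
    have hexp : Real.exp (1 + |Iω|) ≤ ‖z‖ / 2 := by
      have := le_trans hR₂e hz
      linarith
    have hlog : 1 + |Iω| ≤ Real.log (‖z‖ / 2) := by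
      calc 1 + |Iω| = Real.log (Real.exp (1 + |Iω|)) := (Real.log_exp _).symm
        _ ≤ Real.log (‖z‖ / 2) := Real.log_le_log (Real.exp_pos _) hexp
    have habs : Iω ≤ |Iω| := le_abs_self _
    simp only [greenFn]
    rw [← hIωdef]
    linarith
  -- Green's function is close to log |z| far away
  have hg2 : ∀ z : ℂ, 2 * R₀ ≤ ‖z‖ →
      |greenFn ω z - Real.log (‖z‖)| ≤ Real.log 2 + |Iω| := by
    intro z hz
    have hz0 : (0:ℝ) < ‖z‖ := by linarith
    have hp := aux_potential ω K hsupp R₀ hR₀1 hKsub z hz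
    have e1 : Real.log (‖z‖ / 2) = Real.log (‖z‖) - Real.log 2 :=
      Real.log_div (ne_of_gt hz0) (by norm_num)
    have e2 : Real.log (2 * ‖z‖) = Real.log 2 + Real.log (‖z‖) :=
      Real.log_mul (by norm_num) (ne_of_gt hz0)
    have habs1 : Iω ≤ |Iω| := le_abs_self _
    have habs2 : -|Iω| ≤ Iω := neg_abs_le _
    rw [abs_le]
    simp only [greenFn]
    rw [← hIωdef]
    constructor
    · rw [e1] at hp; linarith [hp.1]
    · rw [e2] at hp; linarith [hp.2]
  rw [Metric.tendstoUniformlyOn_iff] at hu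
  -- roots eventually in closedBall R₂
  have hroots : ∀ᶠ k in atTop, ∀ r ∈ (q k).roots, ‖r‖ ≤ R₂ := by
    filter_upwards [hu (1/2) (by norm_num)] with k hk
    intro r hr
    by_contra hcon
    push_neg at hcon
    have hz : r ∈ (closedBall (0:ℂ) R₁)ᶜ := by
      simp only [Set.mem_compl_iff, mem_closedBall, Complex.dist_eq, sub_zero, not_le]
      exact lt_of_le_of_lt hR₂R₁ hcon
    have hd := hk r hz
    have hev : (q k).eval r = 0 := (Polynomial.mem_roots'.mp hr).2
    rw [hev, norm_zero, Real.log_zero, mul_zero, Real.dist_eq, sub_zero] at hd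
    have hge := hg1 r hcon.le
    have := le_abs_self (greenFn ω r)
    linarith
  refine ⟨3 * R₂, by linarith, ?_⟩
  rw [Metric.tendstoUniformlyOn_iff]
  intro ε hε
  set Cc : ℝ := 2 * Real.log 2 + |Iω| with hCcdef
  have hN3 : ∀ᶠ k in atTop,
      (Real.log ((q k).natDegree) + Cc) / (((q k).natDegree : ℝ) - 1) < ε / 2 :=
    ((aux_tendsto Cc).comp hdeg).eventually_lt_const (by linarith)
  filter_upwards [hroots, hu (ε/4) (by linarith), hdeg.eventually (eventually_ge_atTop 2),
    hN3] with k hk1 hk2 hkn hk3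
  intro z hzmem
  set n := (q k).natDegree with hndef
  have hn2 : 2 ≤ n := hkn
  have hq0 : q k ≠ 0 := by
    intro h0
    rw [h0] at hndef
    simp [hndef] at hn2
  have habsz : 3 * R₂ < ‖z‖ := by
    simp only [Set.mem_compl_iff, mem_closedBall, Complex.dist_eq, sub_zero, not_le] at hzmem
    exact hzmem
  have hzpos : (0:ℝ) < ‖z‖ := by linarith
  have hcard : Multiset.card (q k).roots = n :=
    (Polynomial.splits_iff_card_roots).mp (IsAlgClosed.splits _)
  have hzr : ∀ r ∈ (q k).roots, z - r ≠ 0 := by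
    intro r hr hc
    have h1 := hk1 r hr
    rw [sub_eq_zero] at hc
    rw [hc] at habsz
    linarith
  have hSb := aux_sum_bound (q k).roots R₂ z hR₂pos hk1 (by linarith)
  rw [hcard] at hSb
  set S := ((q k).roots.map fun r => (z - r)⁻¹).sum with hSdef
  have hnR : (2:ℝ) ≤ (n:ℝ) := by exact_mod_cast hn2
  have hSpos : 0 < ‖S‖ :=
    lt_of_lt_of_le (by positivity) hSb.1
  have hqz : (q k).eval z ≠ 0 := by
    intro h0
    have hz' : z ∈ (q k).roots := Polynomial.mem_roots'.mpr ⟨hq0, h0⟩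
    have := hk1 z hz'
    linarith
  have hqzpos : 0 < ‖(q k).eval z‖ := by
    simpa [norm_pos_iff] using hqz
  have hder : (Polynomial.derivative (q k)).eval z = (q k).eval z * S :=
    aux_deriv_eval (q k) z hcard hzr
  have hmdeg : (Polynomial.derivative (q k)).natDegree = n - 1 := by
    have hd := Polynomial.degree_derivative_eq (q k) (by omega : 0 < (q k).natDegree)
    exact Polynomial.natDegree_eq_of_degree_eq_some hd
  have hcast : (((n - 1 : ℕ)) : ℝ) = (n:ℝ) - 1 := by
    rw [Nat.cast_sub (by omega)]
    norm_num
  have hn1pos : (0:ℝ) < (n:ℝ) - 1 := by linarith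
  have hlogder : Real.log (‖(Polynomial.derivative (q k)).eval z‖)
      = Real.log (‖(q k).eval z‖) + Real.log (‖S‖) := by
    rw [hder, norm_mul]
    exact Real.log_mul (ne_of_gt hqzpos) (ne_of_gt hSpos)
  -- uniform bound on q
  have hz₁ : z ∈ (closedBall (0:ℂ) R₁)ᶜ := by
    simp only [Set.mem_compl_iff, mem_closedBall, Complex.dist_eq, sub_zero, not_le]
    linarith
  have hA := hk2 z hz₁
  rw [Real.dist_eq] at hA
  -- bounds on log |S|
  have hlogn : (0:ℝ) ≤ Real.log n := Real.log_nonneg (by linarith)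
  have hlog2 : (0:ℝ) ≤ Real.log 2 := Real.log_nonneg (by norm_num)
  have hS1 : Real.log ((n:ℝ) / (2 * ‖z‖)) ≤ Real.log (‖S‖) :=
    Real.log_le_log (by positivity) hSb.1
  have hS2 : Real.log (‖S‖) ≤ Real.log (3 * (n:ℝ) / (2 * ‖z‖)) :=
    Real.log_le_log hSpos hSb.2
  have e1 : Real.log ((n:ℝ) / (2 * ‖z‖))
      = Real.log n - (Real.log 2 + Real.log (‖z‖)) := by
    rw [Real.log_div (by positivity) (by positivity), Real.log_mul (by norm_num) (ne_of_gt hzpos)]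
  have e2 : Real.log (3 * (n:ℝ) / (2 * ‖z‖))
      = Real.log 3 + Real.log n - (Real.log 2 + Real.log (‖z‖)) := by
    rw [Real.log_div (by positivity) (by positivity), Real.log_mul (by norm_num) (by positivity),
      Real.log_mul (by norm_num) (ne_of_gt hzpos)]
  have hlog32 : Real.log 3 ≤ 2 * Real.log 2 := by
    rw [show (2:ℝ) * Real.log 2 = Real.log 4 by
      rw [show (4:ℝ) = 2^(2:ℕ) by norm_num, Real.log_pow]; push_cast; ring]
    exact Real.log_le_log (by norm_num) (by norm_num)
  have hSabs : |Real.log (‖S‖) + Real.log (‖z‖)| ≤ Real.log n + Real.log 2 := by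
    rw [abs_le]
    constructor
    · rw [e1] at hS1; linarith
    · rw [e2] at hS2; linarith
  have hg2z := hg2 z (by linarith)
  -- final estimate
  rw [Real.dist_eq, hmdeg, hcast, hlogder]
  set g := greenFn ω z with hgdef
  set L := Real.log (‖(q k).eval z‖) with hLdef
  set LS := Real.log (‖S‖) with hLSdef
  set a := ((n:ℝ))⁻¹ * L with hadef
  have hnne : ((n:ℝ)) ≠ 0 := ne_of_gt (by linarith : (0:ℝ) < (n:ℝ))
  have hn1ne : ((n:ℝ)) - 1 ≠ 0 := ne_of_gt hn1pos
  have heq : g - ((n:ℝ) - 1)⁻¹ * (L + LS)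
      = (g - a) - (a - g) / ((n:ℝ) - 1) - (g + LS) / ((n:ℝ) - 1) := by
    rw [hadef]
    field_simp
    ring
  have hgLS : |g + LS| ≤ Real.log n + Cc := by
    have : g + LS = (g - Real.log (‖z‖)) + (LS + Real.log (‖z‖)) := by ring
    rw [this]
    calc |(g - Real.log (‖z‖)) + (LS + Real.log (‖z‖))|
        ≤ |g - Real.log (‖z‖)| + |LS + Real.log (‖z‖)| := abs_add_le _ _
      _ ≤ (Real.log 2 + |Iω|) + (Real.log n + Real.log 2) := add_le_add hg2z hSabs
      _ = Real.log n + Cc := by rw [hCcdef]; ring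
  have hineq : |g - ((n:ℝ) - 1)⁻¹ * (L + LS)|
      ≤ |g - a| + |g - a| / ((n:ℝ) - 1) + (Real.log n + Cc) / ((n:ℝ) - 1) := by
    rw [heq]
    have h3 := aux_abs3 (g - a) ((a - g) / ((n:ℝ) - 1)) ((g + LS) / ((n:ℝ) - 1))
    have h4 : |(a - g) / ((n:ℝ) - 1)| = |g - a| / ((n:ℝ) - 1) := by
      rw [abs_div, abs_of_pos hn1pos, abs_sub_comm]
    have h5 : |(g + LS) / ((n:ℝ) - 1)| ≤ (Real.log n + Cc) / ((n:ℝ) - 1) := by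
      rw [abs_div, abs_of_pos hn1pos]
      exact (div_le_div_iff_of_pos_right hn1pos).mpr hgLS
    linarith
  have hga : |g - a| < ε / 4 := hA
  have hdivsmall : |g - a| / ((n:ℝ) - 1) ≤ |g - a| := by
    rw [div_le_iff₀ hn1pos]
    exact le_mul_of_one_le_right (abs_nonneg _) (by linarith)
  linarith [hk3, hineq, hga, hdivsmall]

theorem stmt_3 (K : Set ℂ) (hK : IsCompact K) (hnp : NonPolar K)
    (hpc : IsConnected Kᶜ) (ω : Measure ℂ) (hω : IsEquilibriumMeasure K ω)
    (q : ℕ → Polynomial ℂ)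
    (hdeg : Tendsto (fun k => (q k).natDegree) atTop atTop)
    (h : KRegular q (greenFn ω)) :
    KRegular (fun k => Polynomial.derivative (q k)) (greenFn ω) := by
  obtain ⟨R₁, hR₁, hu⟩ := h
  exact stmt_3' K hK ω hω.prob hω.supp q hdeg R₁ hR₁ hu
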